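/- arXiv:1804.05643 — 3 statements merged into one kernel-verified Lean document; each statement's English description precedes it below -/
import Mathlib

section
/- Let τ(f) denote the number of monic divisors of a nonzero polynomial f ∈ F_q[t]. For every ε > 0 there exists a constant C(ε) > 0, depending only on ε (and in particular independent of q), such that τ(f) ≤ C(ε) |f|^ε for all nonzero f ∈ F_q[t], where |f| = q^{deg f}. -/
open scoped Classical
open Polynomial

noncomputable section

/-- The number of monic divisors of a polynomial `f`. -/
def tauPoly {Fq : Type} [Field Fq] (f : Polynomial Fq) : ℕ :=
  Nat.card {g : Polynomial Fq // g.Monic ∧ g ∣ f}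

namespace TauAux

open UniqueFactorizationMonoid

variable {Fq : Type} [Field Fq]

theorem tau_le_prod (f : Polynomial Fq) (hf : f ≠ 0) :
    tauPoly f ≤
      ∏ p ∈ (normalizedFactors f).toFinset, ((normalizedFactors f).count p + 1) := by
  classical
  set P := (normalizedFactors f).toFinset with hP
  have hcount : ∀ (g : {g : Polynomial Fq // g.Monic ∧ g ∣ f}) (p : P),
      (normalizedFactors g.1).count p.1 < (normalizedFactors f).count p.1 + 1 := by
    intro g p
    have hg0 : g.1 ≠ 0 := g.2.1.ne_zero
    have hle := (dvd_iff_normalizedFactors_le_normalizedFactors hg0 hf).mp g.2.2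
    exact Nat.lt_succ_of_le (Multiset.le_iff_count.mp hle p.1)
  set Φ : {g : Polynomial Fq // g.Monic ∧ g ∣ f} →
      (∀ p : P, Fin ((normalizedFactors f).count p.1 + 1)) :=
    fun g p => ⟨(normalizedFactors g.1).count p.1, hcount g p⟩ with hΦ
  have hinj : Function.Injective Φ := by
    intro g₁ g₂ h
    have hc : ∀ p ∈ P, (normalizedFactors g₁.1).count p = (normalizedFactors g₂.1).count p := by
      intro p hp
      have := congrFun h ⟨p, hp⟩
      simpa [hΦ, Fin.ext_iff] using this
    have hout : ∀ (g : {g : Polynomial Fq // g.Monic ∧ g ∣ f}) (r : Polynomial Fq), r ∉ P →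
        (normalizedFactors g.1).count r = 0 := by
      intro g r hr
      by_contra hne
      have hmem : r ∈ normalizedFactors g.1 := Multiset.count_pos.mp (Nat.pos_of_ne_zero hne)
      have hirr : Irreducible r := irreducible_of_normalized_factor r hmem
      have hrdvd : r ∣ f := (dvd_of_mem_normalizedFactors hmem).trans g.2.2
      obtain ⟨r', hr'mem, hr'assoc⟩ := exists_mem_normalizedFactors_of_dvd hf hirr hrdvd
      have : r = r' := by
        have h1 : normalize r = normalize r' :=
          normalize_eq_normalize_iff.mpr ⟨hr'assoc.dvd, hr'assoc.symm.dvd⟩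
        rwa [normalize_normalized_factor r hmem, normalize_normalized_factor r' hr'mem] at h1
      exact hr (by rw [hP, this]; exact Multiset.mem_toFinset.mpr hr'mem)
    have heq : normalizedFactors g₁.1 = normalizedFactors g₂.1 := by
      ext r
      by_cases hr : r ∈ P
      · exact hc r hr
      · rw [hout g₁ r hr, hout g₂ r hr]
    have h₁ := prod_normalizedFactors g₁.2.1.ne_zero
    have h₂ := prod_normalizedFactors g₂.2.1.ne_zero
    have : Associated g₁.1 g₂.1 := h₁.symm.trans (heq ▸ h₂)
    exact Subtype.ext (eq_of_monic_of_associated g₁.2.1 g₂.2.1 this)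
  calc Nat.card {g : Polynomial Fq // g.Monic ∧ g ∣ f}
      ≤ Nat.card (∀ p : P, Fin ((normalizedFactors f).count p.1 + 1)) :=
        Nat.card_le_card_of_injective Φ hinj
    _ = ∏ p ∈ P, ((normalizedFactors f).count p + 1) := by
        rw [Nat.card_eq_fintype_card, Fintype.card_pi]
        simp only [Fintype.card_fin]
        exact Finset.prod_attach P (fun p => (normalizedFactors f).count p + 1)

theorem natDegree_eq_sum (f : Polynomial Fq) (hf : f ≠ 0) :
    f.natDegree = ∑ p ∈ (normalizedFactors f).toFinset,
      (normalizedFactors f).count p * p.natDegree := by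
  classical
  obtain ⟨u, hu⟩ := (prod_normalizedFactors hf)
  have h0 : (0 : Polynomial Fq) ∉ normalizedFactors f := zero_notMem_normalizedFactors f
  have hprod0 : (normalizedFactors f).prod ≠ 0 := fun h => h0 (Multiset.prod_eq_zero_iff.mp h)
  have hu0 : (u : Polynomial Fq) ≠ 0 := u.ne_zero
  have h1 : f.natDegree = ((normalizedFactors f).prod).natDegree := by
    conv_lhs => rw [← hu]
    rw [natDegree_mul hprod0 hu0, natDegree_eq_zero_of_isUnit u.isUnit, add_zero]
  rw [h1, natDegree_multiset_prod _ h0, Finset.sum_multiset_map_count]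
  simp [smul_eq_mul]

theorem card_le_pow (D : ℕ) [Fintype Fq] (P' : Finset (Polynomial Fq))
    (hP : ∀ p ∈ P', p.natDegree ≤ D) : P'.card ≤ Fintype.card Fq ^ (D + 1) := by
  classical
  refine le_trans (Finset.card_le_card_of_injOn
      (t := (Finset.univ : Finset (Fin (D + 1) → Fq)))
      (fun (p : Polynomial Fq) (i : Fin (D + 1)) => p.coeff i)
      (fun _ _ => Finset.mem_univ _) ?_) ?_
  · intro p₁ h₁ p₂ h₂ heq
    ext n
    by_cases hn : n ≤ D
    · exact congrFun heq ⟨n, Nat.lt_succ_of_le hn⟩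
    · push_neg at hn
      rw [coeff_eq_zero_of_natDegree_lt (lt_of_le_of_lt (hP p₁ h₁) hn),
        coeff_eq_zero_of_natDegree_lt (lt_of_le_of_lt (hP p₂ h₂) hn)]
  · simp [Fintype.card_fun]

end TauAux

/-- the divisor bound `τ(f) ≤ C(ε) |f|^ε`, with the constant
depending only on `ε` (in particular independent of `q`). -/
theorem stmt_3 :
    ∀ ε : ℝ, 0 < ε → ∃ C : ℝ, 0 < C ∧
      ∀ (Fq : Type) [Field Fq] [Fintype Fq] (f : Polynomial Fq), f ≠ 0 →
        (tauPoly f : ℝ) ≤ C * (((Fintype.card Fq : ℝ) ^ f.natDegree) ^ ε) := by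
  intro ε hε
  classical
  set s : ℝ := (2 : ℝ) ^ ε - 1 with hs
  have hs0 : 0 < s := by
    have : (1 : ℝ) < (2 : ℝ) ^ ε :=
      (Real.one_lt_rpow_iff_of_pos (by norm_num)).mpr (Or.inl ⟨one_lt_two, hε⟩)
    simp only [hs]; linarith
  set B : ℝ := max 1 (1 / s) with hB
  have hB1 : (1 : ℝ) ≤ B := le_max_left _ _
  have hBs : 1 ≤ B * s := by
    have h1 : 1 / s ≤ B := le_max_right _ _
    have := mul_le_mul_of_nonneg_right h1 hs0.le
    rwa [one_div, inv_mul_cancel₀ hs0.ne'] at this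
  set D : ℕ := ⌈1 / ε⌉₊ with hD
  set Q : ℕ := ⌈(2 : ℝ) ^ (1 / ε)⌉₊ with hQ
  set K : ℕ := Q ^ (D + 1) with hK
  refine ⟨B ^ K, by positivity, ?_⟩
  intro Fq _ _ f hf
  set q : ℕ := Fintype.card Fq with hqdef
  have hq2 : 2 ≤ q := Fintype.one_lt_card
  have hq1 : (1 : ℝ) ≤ (q : ℝ) := by
    have : (2 : ℝ) ≤ (q : ℝ) := by exact_mod_cast hq2
    linarith
  set r : ℝ := (q : ℝ) ^ ε with hr
  have hr0 : 0 ≤ r := Real.rpow_nonneg (by positivity) _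
  have hr1 : 1 ≤ r := Real.one_le_rpow hq1 hε.le
  have hr2 : (2 : ℝ) ^ ε ≤ r := Real.rpow_le_rpow (by norm_num) (by exact_mod_cast hq2) hε.le
  set P := (UniqueFactorizationMonoid.normalizedFactors f).toFinset with hPdef
  set e : Polynomial Fq → ℕ := fun p => (UniqueFactorizationMonoid.normalizedFactors f).count p
    with he
  have hmem : ∀ p ∈ P, 1 ≤ p.natDegree := by
    intro p hp
    have hp' : p ∈ UniqueFactorizationMonoid.normalizedFactors f := Multiset.mem_toFinset.mp hp
    exact (UniqueFactorizationMonoid.irreducible_of_normalized_factor p hp').natDegree_pos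
  -- per-prime bound
  have key : ∀ p ∈ P, ((e p : ℝ) + 1) ≤
      (if r ^ p.natDegree < 2 then B else 1) * r ^ (e p * p.natDegree) := by
    intro p hp
    have hd1 : 1 ≤ p.natDegree := hmem p hp
    have hrd : r ^ (e p * p.natDegree) = (r ^ p.natDegree) ^ (e p) := by
      rw [← pow_mul, mul_comm]
    by_cases hsmall : r ^ p.natDegree < 2
    · rw [if_pos hsmall, hrd]
      have hself : r ≤ r ^ p.natDegree := le_self_pow₀ hr1 (by omega)
      have h2r : (1 : ℝ) + s ≤ r ^ p.natDegree := by
        have : (1 : ℝ) + s = (2 : ℝ) ^ ε := by simp [hs]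
        rw [this]; exact hr2.trans hself
      calc ((e p : ℝ) + 1) ≤ B * (1 + (e p : ℝ) * s) := by
            nlinarith [Nat.cast_nonneg (α := ℝ) (e p), hB1, hBs, hs0.le]
        _ ≤ B * ((1 + s) ^ (e p)) := by
            have := one_add_mul_le_pow (a := s) (by linarith) (e p)
            have h' : 1 + (e p : ℝ) * s ≤ (1 + s) ^ (e p) := by
              calc 1 + (e p : ℝ) * s = 1 + (e p : ℝ) * s := rfl
                _ ≤ (1 + s) ^ (e p) := by exact_mod_cast this
            exact mul_le_mul_of_nonneg_left h' (by linarith)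
        _ ≤ B * ((r ^ p.natDegree) ^ (e p)) := by
            refine mul_le_mul_of_nonneg_left ?_ (by linarith)
            exact pow_le_pow_left₀ (by linarith) h2r _
    · rw [if_neg hsmall, one_mul, hrd]
      push_neg at hsmall
      have h2 : ((e p : ℝ) + 1) ≤ 2 ^ (e p) := by
        have := Nat.lt_two_pow_self (n := e p)
        exact_mod_cast Nat.succ_le_of_lt this
      calc ((e p : ℝ) + 1) ≤ 2 ^ (e p) := h2
        _ ≤ (r ^ p.natDegree) ^ (e p) := pow_le_pow_left₀ (by norm_num) hsmall _
  -- cardinality of small primes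
  set Ps := P.filter (fun p => r ^ p.natDegree < 2) with hPs
  have hcard : Ps.card ≤ K := by
    rcases Finset.eq_empty_or_nonempty Ps with hemp | ⟨p₀, hp₀⟩
    · simp [hemp]
    · have hp₀' := Finset.mem_filter.mp hp₀
      have hd1 := hmem p₀ hp₀'.1
      have hrlt2 : r < 2 := lt_of_le_of_lt (le_self_pow₀ hr1 (by omega)) hp₀'.2
      have hqQ : q ≤ Q := by
        have h1 : (q : ℝ) < (2 : ℝ) ^ (1 / ε) := by
          have h2 : ((q : ℝ) ^ ε) ^ (1 / ε) < (2 : ℝ) ^ (1 / ε) :=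
            Real.rpow_lt_rpow hr0 hrlt2 (by positivity)
          rwa [← Real.rpow_mul (by positivity), mul_one_div, div_self hε.ne',
            Real.rpow_one] at h2
        have h2 : (q : ℝ) ≤ (Q : ℝ) := h1.le.trans (Nat.le_ceil _)
        exact_mod_cast h2
      have hdeg : ∀ p ∈ Ps, p.natDegree ≤ D := by
        intro p hp
        have hp' := Finset.mem_filter.mp hp
        have hlt : (2 : ℝ) ^ (ε * (p.natDegree : ℝ)) < 2 ^ (1 : ℝ) := by
          rw [Real.rpow_mul (by norm_num), Real.rpow_natCast]
          calc ((2 : ℝ) ^ ε) ^ p.natDegree ≤ r ^ p.natDegree :=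
                pow_le_pow_left₀ (by positivity) hr2 _
            _ < 2 := hp'.2
            _ = 2 ^ (1 : ℝ) := (Real.rpow_one 2).symm
        have hεd : ε * (p.natDegree : ℝ) < 1 := (Real.rpow_lt_rpow_left_iff one_lt_two).mp hlt
        have hlt2 : (p.natDegree : ℝ) < 1 / ε := by
          rw [lt_div_iff₀ hε]; linarith [mul_comm ε (p.natDegree : ℝ)]
        have hle : (p.natDegree : ℝ) ≤ (D : ℝ) := hlt2.le.trans (Nat.le_ceil _)
        exact_mod_cast hle
      calc Ps.card ≤ q ^ (D + 1) := TauAux.card_le_pow D Ps hdeg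
        _ ≤ Q ^ (D + 1) := Nat.pow_le_pow_left hqQ _
  -- assemble
  calc (tauPoly f : ℝ)
      ≤ ((∏ p ∈ P, (e p + 1) : ℕ) : ℝ) := by exact_mod_cast TauAux.tau_le_prod f hf
    _ = ∏ p ∈ P, ((e p : ℝ) + 1) := by push_cast; rfl
    _ ≤ ∏ p ∈ P, ((if r ^ p.natDegree < 2 then B else 1) * r ^ (e p * p.natDegree)) :=
        Finset.prod_le_prod (fun p _ => by positivity) key
    _ = (∏ p ∈ P, (if r ^ p.natDegree < 2 then B else 1)) *
          ∏ p ∈ P, r ^ (e p * p.natDegree) := Finset.prod_mul_distrib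
    _ = B ^ Ps.card * r ^ (∑ p ∈ P, e p * p.natDegree) := by
        rw [Finset.prod_ite, Finset.prod_const, Finset.prod_const_one, mul_one,
          Finset.prod_pow_eq_pow_sum]
    _ ≤ B ^ K * r ^ f.natDegree := by
        rw [TauAux.natDegree_eq_sum f hf]
        exact mul_le_mul_of_nonneg_right (pow_le_pow_right₀ hB1 hcard)
          (by positivity)
    _ = B ^ K * ((q : ℝ) ^ f.natDegree) ^ ε := by
        rw [hr, ← Real.rpow_natCast ((q : ℝ) ^ ε) f.natDegree,
          ← Real.rpow_mul (by positivity), mul_comm ε, Real.rpow_mul (by positivity),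
          Real.rpow_natCast]
end
end

section
/- For any nonzero polynomial d ∈ F_q[t] and any y > 0, the number of monic k-full polynomials r ∈ F_q[t] with |r| ≤ y is O(y^{1/k}); in particular the number of monic cube-full (3-full) polynomials of norm at most q^Y is O(q^{Y/3}), with implied constant independent of q. -/
open scoped Classical
open Polynomial

noncomputable section

/-- A monic polynomial `r` is `k`-full if `ϖ ∣ r` implies `ϖ^k ∣ r` for every
monic irreducible `ϖ`. -/
def IsKFull {Fq : Type} [Field Fq] (k : ℕ) (r : Polynomial Fq) : Prop :=
  ∀ ϖ : Polynomial Fq, ϖ.Monic → Irreducible ϖ → ϖ ∣ r → ϖ ^ k ∣ r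

namespace Stmt13Aux

open UniqueFactorizationMonoid Finset

/-! ### Arithmetic helpers -/

/-- the "remainder" exponent: `0` if `k ∣ e`, otherwise `k + e % k`. -/
def bfun (k e : ℕ) : ℕ := if k ∣ e then 0 else k + e % k

/-- the "quotient" exponent. -/
def afun (k e : ℕ) : ℕ := if k ∣ e then e / k else e / k - 1

lemma bfun_lt (k e : ℕ) (hk : 1 ≤ k) : bfun k e < 2 * k := by
  unfold bfun; split
  · omega
  · have := Nat.mod_lt e (show 0 < k by omega); omega

lemma bfun_cases (k e : ℕ) : bfun k e = 0 ∨ k + 1 ≤ bfun k e := by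
  unfold bfun; split
  · exact Or.inl rfl
  · right
    rename_i h
    have : e % k ≠ 0 := fun hh => h (Nat.dvd_of_mod_eq_zero hh)
    omega

lemma afun_bfun (k e : ℕ) (hk : 1 ≤ k) (he : k ≤ e) : k * afun k e + bfun k e = e := by
  unfold afun bfun; split
  · rename_i h
    simp only [add_zero]
    exact Nat.mul_div_cancel' h
  · rename_i h
    have h1 : 1 ≤ e / k := (Nat.one_le_div_iff (by omega)).mpr he
    have h2 := Nat.div_add_mod e k
    obtain ⟨c, hc⟩ := Nat.exists_eq_add_of_le h1
    rw [hc] at h2 ⊢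
    rw [mul_add, mul_one] at h2
    simp only [Nat.add_sub_cancel_left]
    omega

/-! ### The decomposition of a `k`-full polynomial -/

variable {Fq : Type} [Field Fq]

/-- The `a` part in the decomposition `r = a^k * ∏ cᵢ^(k+1+i)`. -/
def A (k : ℕ) (r : Polynomial Fq) : Polynomial Fq :=
  ∏ ϖ ∈ (normalizedFactors r).toFinset, ϖ ^ afun k ((normalizedFactors r).count ϖ)

/-- The `cᵢ` parts in the decomposition `r = a^k * ∏ cᵢ^(k+1+i)`. -/
def Cc (k : ℕ) (r : Polynomial Fq) (i : Fin (k - 1)) : Polynomial Fq :=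
  ∏ ϖ ∈ (normalizedFactors r).toFinset.filter
      (fun ϖ => bfun k ((normalizedFactors r).count ϖ) = k + 1 + (i : ℕ)), ϖ

lemma monic_mem {r ϖ : Polynomial Fq} (h : ϖ ∈ normalizedFactors r) : ϖ.Monic := by
  have h2 := normalize_normalized_factor ϖ h
  have h1 := irreducible_of_normalized_factor ϖ h
  rw [← h2]
  exact Polynomial.monic_normalize h1.ne_zero

lemma monic_A (k : ℕ) (r : Polynomial Fq) : (A k r).Monic :=
  monic_prod_of_monic _ _ fun ϖ hϖ => (monic_mem (Multiset.mem_toFinset.mp hϖ)).pow _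

lemma monic_Cc (k : ℕ) (r : Polynomial Fq) (i : Fin (k - 1)) : (Cc k r i).Monic :=
  monic_prod_of_monic _ _ fun ϖ hϖ =>
    monic_mem (Multiset.mem_toFinset.mp (mem_filter.mp hϖ).1)

lemma k_le_count {k : ℕ} {r ϖ : Polynomial Fq} (hr : r.Monic) (hfull : IsKFull k r)
    (hϖ : ϖ ∈ normalizedFactors r) : k ≤ (normalizedFactors r).count ϖ := by
  have hirr := irreducible_of_normalized_factor ϖ hϖ
  have hmon := monic_mem hϖ
  have hdvd : ϖ ^ k ∣ r := hfull ϖ hmon hirr (dvd_of_mem_normalizedFactors hϖ)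
  have hr0 : r ≠ 0 := hr.ne_zero
  have h := (dvd_iff_normalizedFactors_le_normalizedFactors
    (pow_ne_zero k hirr.ne_zero) hr0).mp hdvd
  rw [hirr.normalizedFactors_pow, normalize_normalized_factor ϖ hϖ] at h
  exact Multiset.le_count_iff_replicate_le.mpr h

lemma decomp (k : ℕ) (hk : 1 ≤ k) (r : Polynomial Fq) (hr : r.Monic) (hfull : IsKFull k r) :
    A k r ^ k * ∏ i : Fin (k - 1), Cc k r i ^ (k + 1 + (i : ℕ)) = r := by
  have hr0 : r ≠ 0 := hr.ne_zero
  set F := normalizedFactors r with hF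
  set T := F.toFinset with hT
  have hcount : ∀ ϖ ∈ T, k ≤ F.count ϖ := fun ϖ hϖ =>
    k_le_count hr hfull (Multiset.mem_toFinset.mp hϖ)
  have hprod_monic : F.prod.Monic := by
    rw [Finset.prod_multiset_count]
    exact monic_prod_of_monic _ _ fun ϖ hϖ =>
      (monic_mem (Multiset.mem_toFinset.mp hϖ)).pow _
  have hr_eq : ∏ ϖ ∈ T, ϖ ^ F.count ϖ = r := by
    rw [← Finset.prod_multiset_count]
    exact Polynomial.eq_of_monic_of_associated hprod_monic hr (prod_normalizedFactors hr0)
  -- the c-part equals the product of the `bfun` powers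
  have step : ∏ i : Fin (k - 1), Cc k r i ^ (k + 1 + (i : ℕ))
      = ∏ ϖ ∈ T, ϖ ^ bfun k (F.count ϖ) := by
    have hmaps : ∀ ϖ ∈ T, bfun k (F.count ϖ) ∈ range (2 * k) := fun ϖ _ =>
      mem_range.mpr (bfun_lt k _ hk)
    rw [← Finset.prod_fiberwise_of_maps_to hmaps (fun ϖ => ϖ ^ bfun k (F.count ϖ))]
    have h1 : ∀ j ∈ range (2 * k),
        (∏ ϖ ∈ T.filter (fun ϖ => bfun k (F.count ϖ) = j), ϖ ^ bfun k (F.count ϖ))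
          = (∏ ϖ ∈ T.filter (fun ϖ => bfun k (F.count ϖ) = j), ϖ) ^ j := by
      intro j _
      rw [← Finset.prod_pow]
      exact prod_congr rfl fun ϖ hϖ => by rw [(mem_filter.mp hϖ).2]
    rw [Finset.prod_congr rfl h1]
    have hsub : Finset.Ico (k + 1) (2 * k) ⊆ range (2 * k) := fun j hj =>
      mem_range.mpr (mem_Ico.mp hj).2
    have hone : ∀ j ∈ range (2 * k), j ∉ Finset.Ico (k + 1) (2 * k) →
        ((∏ ϖ ∈ T.filter (fun ϖ => bfun k (F.count ϖ) = j), ϖ) ^ j) = 1 := by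
      intro j hj hj'
      rw [mem_range] at hj
      rw [mem_Ico, not_and_or, not_le, not_lt] at hj'
      rcases Nat.eq_zero_or_pos j with h0 | h0
      · rw [h0, pow_zero]
      · have hje : j ≤ k := by omega
        have : T.filter (fun ϖ => bfun k (F.count ϖ) = j) = ∅ := by
          rw [Finset.filter_eq_empty_iff]
          intro ϖ _
          rcases bfun_cases k (F.count ϖ) with hc | hc <;> omega
        rw [this, Finset.prod_empty, one_pow]
    rw [← Finset.prod_subset hsub hone, Finset.prod_Ico_eq_prod_range]
    have h2k : 2 * k - (k + 1) = k - 1 := by omega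
    rw [h2k, ← Fin.prod_univ_eq_prod_range
      (fun j => (∏ ϖ ∈ T.filter (fun ϖ => bfun k (F.count ϖ) = k + 1 + j), ϖ) ^ (k + 1 + j))
      (k - 1)]
    rfl
  rw [step]
  have hA : A k r ^ k = ∏ ϖ ∈ T, ϖ ^ (k * afun k (F.count ϖ)) := by
    rw [A, ← Finset.prod_pow]
    exact prod_congr rfl fun ϖ _ => by rw [← pow_mul, mul_comm]
  rw [hA, ← Finset.prod_mul_distrib]
  rw [← hr_eq]
  exact prod_congr rfl fun ϖ hϖ => by rw [← pow_add, afun_bfun k _ hk (hcount ϖ hϖ)]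

lemma deg_decomp (k : ℕ) (hk : 1 ≤ k) (r : Polynomial Fq) (hr : r.Monic)
    (hfull : IsKFull k r) :
    k * (A k r).natDegree + ∑ i : Fin (k - 1), (k + 1 + (i : ℕ)) * (Cc k r i).natDegree
      = r.natDegree := by
  conv_rhs => rw [← decomp k hk r hr hfull]
  rw [Polynomial.Monic.natDegree_mul ((monic_A k r).pow k)
    (monic_prod_of_monic _ _ fun i _ => (monic_Cc k r i).pow _), Polynomial.natDegree_pow,
    Polynomial.natDegree_prod _ _ (fun i _ => pow_ne_zero _ (monic_Cc k r i).ne_zero)]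
  congr 1
  exact Finset.sum_congr rfl fun i _ => (Polynomial.natDegree_pow _ _).symm

/-- Two monic polynomials with the same degree and the same lower coefficients agree. -/
lemma monic_poly_eq {p q : Polynomial Fq} (hp : p.Monic) (hq : q.Monic)
    (h : p.natDegree = q.natDegree) (hc : ∀ j < p.natDegree, p.coeff j = q.coeff j) :
    p = q := by
  ext n
  rcases lt_trichotomy n p.natDegree with h' | h' | h'
  · exact hc n h'
  · rw [h', hp.coeff_natDegree, h, hq.coeff_natDegree]
  · rw [Polynomial.coeff_eq_zero_of_natDegree_lt h',
      Polynomial.coeff_eq_zero_of_natDegree_lt (h ▸ h')]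

/-! ### The counting sets -/

/-- The index finset of admissible degree data. -/
def Vx (k Y : ℕ) : Finset (ℕ × (Fin (k - 1) → ℕ)) :=
  ((range (Y + 1)) ×ˢ Fintype.piFinset fun _ => range (Y + 1)).filter
    fun dm => k * dm.1 + ∑ i : Fin (k - 1), (k + 1 + (i : ℕ)) * dm.2 i ≤ Y

/-- The fiber of monic `k`-full polynomials with prescribed degree data. -/
def G (k Y : ℕ) (dm : ℕ × (Fin (k - 1) → ℕ)) : Set (Polynomial Fq) :=
  {r | (r.Monic ∧ IsKFull k r ∧ r.natDegree ≤ Y) ∧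
    (A k r).natDegree = dm.1 ∧ ∀ i, (Cc k r i).natDegree = dm.2 i}

variable [Fintype Fq]

lemma G_finite_card (k Y : ℕ) (hk : 1 ≤ k) (dm : ℕ × (Fin (k - 1) → ℕ)) :
    (G (Fq := Fq) k Y dm).Finite ∧
      (G (Fq := Fq) k Y dm).ncard ≤
        Fintype.card Fq ^ dm.1 * ∏ i : Fin (k - 1), Fintype.card Fq ^ dm.2 i := by
  set f : ↥(G (Fq := Fq) k Y dm) →
      (Fin dm.1 → Fq) × (∀ i : Fin (k - 1), Fin (dm.2 i) → Fq) :=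
    fun r => (fun j => (A k r.1).coeff j, fun i j => (Cc k r.1 i).coeff j) with hf
  have hinj : Function.Injective f := by
    rintro ⟨r₁, hG₁⟩ ⟨r₂, hG₂⟩ h
    obtain ⟨⟨hm₁, hk₁, _⟩, hdA₁, hdC₁⟩ := hG₁
    obtain ⟨⟨hm₂, hk₂, _⟩, hdA₂, hdC₂⟩ := hG₂
    have h1 := congrArg Prod.fst h
    have h2 := congrArg Prod.snd h
    simp only [hf] at h1 h2
    have hA : A k r₁ = A k r₂ := by
      refine monic_poly_eq (monic_A k r₁) (monic_A k r₂) (by rw [hdA₁, hdA₂]) ?_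
      intro j hj
      rw [hdA₁] at hj
      exact congrFun h1 ⟨j, hj⟩
    have hC : ∀ i, Cc k r₁ i = Cc k r₂ i := by
      intro i
      refine monic_poly_eq (monic_Cc k r₁ i) (monic_Cc k r₂ i)
        (by rw [hdC₁ i, hdC₂ i]) ?_
      intro j hj
      rw [hdC₁ i] at hj
      exact congrFun (congrFun h2 i) ⟨j, hj⟩
    have : r₁ = r₂ := by
      rw [← decomp k hk r₁ hm₁ hk₁, ← decomp k hk r₂ hm₂ hk₂, hA]
      congr 1
      exact prod_congr rfl fun i _ => by rw [hC i]
    exact Subtype.ext this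
  have hfin : Finite ↥(G (Fq := Fq) k Y dm) := Finite.of_injective f hinj
  refine ⟨Set.finite_coe_iff.mp hfin, ?_⟩
  calc (G (Fq := Fq) k Y dm).ncard = Nat.card ↥(G (Fq := Fq) k Y dm) :=
        (Nat.card_coe_set_eq _).symm
    _ ≤ Nat.card ((Fin dm.1 → Fq) × (∀ i : Fin (k - 1), Fin (dm.2 i) → Fq)) :=
        Nat.card_le_card_of_injective f hinj
    _ = Fintype.card Fq ^ dm.1 * ∏ i : Fin (k - 1), Fintype.card Fq ^ dm.2 i := by
        simp [Nat.card_eq_fintype_card, Fintype.card_fun]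

lemma ncard_biUnion_le {α β : Type*} (s : Finset β) (f : β → Set α) :
    (⋃ b ∈ s, f b).ncard ≤ ∑ b ∈ s, (f b).ncard := by
  classical
  induction s using Finset.induction with
  | empty => simp
  | insert _ _ h ih =>
    rename_i a s
    rw [Finset.set_biUnion_insert, Finset.sum_insert h]
    exact (Set.ncard_union_le _ _).trans (by gcongr)

/-! ### Real-number estimates -/

lemma geom2 {x : ℝ} (hx : 2 ≤ x) (n : ℕ) : ∑ d ∈ range (n + 1), x ^ d ≤ 2 * x ^ n := by
  induction n with
  | zero => norm_num
  | succ n ih =>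
    rw [Finset.sum_range_succ]
    have hxn : (0 : ℝ) ≤ x ^ n := pow_nonneg (by linarith) n
    have : 2 * x ^ n ≤ x ^ (n + 1) := by
      rw [pow_succ]
      nlinarith
    calc (∑ d ∈ range (n + 1), x ^ d) + x ^ (n + 1) ≤ 2 * x ^ n + x ^ (n + 1) := by linarith
      _ ≤ x ^ (n + 1) + x ^ (n + 1) := by linarith
      _ = 2 * x ^ (n + 1) := by ring

lemma geominv {u : ℝ} (h0 : 0 ≤ u) (h1 : u < 1) (n : ℕ) :
    ∑ j ∈ range n, u ^ j ≤ (1 - u)⁻¹ := by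
  have h : (0 : ℝ) < 1 - u := by linarith
  have hun : (0 : ℝ) ≤ u ^ n := pow_nonneg h0 n
  have hsum : (∑ j ∈ range n, u ^ j) * (1 - u) = 1 - u ^ n := by
    have := geom_sum_mul u n
    -- (∑ i in range n, u ^ i) * (u - 1) = u ^ n - 1
    nlinarith [this]
  have h2 : (∑ j ∈ range n, u ^ j) * (1 - u) ≤ 1 := by
    rw [hsum]; linarith
  calc (∑ j ∈ range n, u ^ j) = (∑ j ∈ range n, u ^ j) * (1 - u) * (1 - u)⁻¹ := by
        field_simp
    _ ≤ 1 * (1 - u)⁻¹ := by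
        apply mul_le_mul_of_nonneg_right h2 (by positivity)
    _ = (1 - u)⁻¹ := by ring

lemma analytic (k Y : ℕ) (hk : 1 ≤ k) (x : ℝ) (hx : 2 ≤ x) :
    ∑ dm ∈ Vx k Y, (x ^ dm.1 * ∏ i : Fin (k - 1), x ^ dm.2 i)
      ≤ 2 * ((1 - (1 / 2 : ℝ) ^ ((1 : ℝ) / k))⁻¹) ^ (k - 1) * (x ^ ((1 : ℝ) / k)) ^ Y := by
  have hx0 : (0 : ℝ) < x := by linarith
  have hkR : (k : ℝ) ≠ 0 := Nat.cast_ne_zero.mpr (by omega)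
  set u : ℝ := (1 / 2 : ℝ) ^ ((1 : ℝ) / k) with hu
  have hu0 : 0 < u := Real.rpow_pos_of_pos (by norm_num) _
  have hu1 : u < 1 := Real.rpow_lt_one (by norm_num) (by norm_num) (by positivity)
  set t : ℝ := x ^ ((1 : ℝ) / k) with ht
  have ht0 : 0 < t := Real.rpow_pos_of_pos hx0 _
  have htk : t ^ k = x := by
    rw [ht, ← Real.rpow_natCast (x ^ ((1 : ℝ) / k)) k, ← Real.rpow_mul hx0.le, one_div,
      inv_mul_cancel₀ hkR, Real.rpow_one]
  have hut : u⁻¹ ≤ t := by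
    have h2 : u = ((2 : ℝ) ^ ((1 : ℝ) / k))⁻¹ := by
      rw [hu, one_div (2 : ℝ), ← Real.inv_rpow (by norm_num)]
    rw [h2, inv_inv]
    exact Real.rpow_le_rpow (by norm_num) hx (by positivity)
  have ht1 : 1 ≤ t := by
    have hmul : u * u⁻¹ = 1 := mul_inv_cancel₀ hu0.ne'
    have hinv0 : (0 : ℝ) ≤ u⁻¹ := by positivity
    have h9 : 1 ≤ u⁻¹ := by nlinarith
    exact le_trans h9 hut
  -- key exponent estimate
  have key : ∀ a s : ℕ, a + s ≤ Y → t ^ a ≤ t ^ Y * u ^ s := by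
    intro a s has
    have h2 : t ^ a * (u⁻¹) ^ s ≤ t ^ Y := by
      calc t ^ a * (u⁻¹) ^ s ≤ t ^ a * t ^ s := by
            apply mul_le_mul_of_nonneg_left (pow_le_pow_left₀ (by positivity) hut s)
              (by positivity)
        _ = t ^ (a + s) := (pow_add t a s).symm
        _ ≤ t ^ Y := pow_le_pow_right₀ ht1 has
    calc t ^ a = t ^ a * ((u⁻¹) ^ s * u ^ s) := by
          rw [← mul_pow, inv_mul_cancel₀ hu0.ne', one_pow, mul_one]
      _ = (t ^ a * (u⁻¹) ^ s) * u ^ s := by ring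
      _ ≤ t ^ Y * u ^ s := mul_le_mul_of_nonneg_right h2 (by positivity)
  -- rewrite the sum
  rw [Vx, Finset.sum_filter, Finset.sum_product, Finset.sum_comm]
  have inner : ∀ m ∈ Fintype.piFinset (fun _ : Fin (k - 1) => range (Y + 1)),
      (∑ d ∈ range (Y + 1),
        if k * d + ∑ i : Fin (k - 1), (k + 1 + (i : ℕ)) * m i ≤ Y then
          x ^ d * ∏ i : Fin (k - 1), x ^ m i else 0)
        ≤ 2 * t ^ Y * ∏ i : Fin (k - 1), u ^ m i := by
    intro m _
    set w := ∑ i : Fin (k - 1), (k + 1 + (i : ℕ)) * m i with hw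
    set s := ∑ i : Fin (k - 1), m i with hs
    have hprodx : ∏ i : Fin (k - 1), x ^ m i = x ^ s :=
      Finset.prod_pow_eq_pow_sum _ _ _
    have hprodu : ∏ i : Fin (k - 1), u ^ m i = u ^ s :=
      Finset.prod_pow_eq_pow_sum _ _ _
    by_cases hwY : w ≤ Y
    · set D := (Y - w) / k with hD
      have hfil : ∀ a : ℕ, (k * a + w ≤ Y) ↔ a ≤ D := by
        intro a
        rw [hD, Nat.le_div_iff_mul_le (show 0 < k by omega), mul_comm]
        omega
      have hDY : D ≤ Y := le_trans (Nat.div_le_self _ _) (Nat.sub_le _ _)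
      have hset : (range (Y + 1)).filter (fun a => k * a + w ≤ Y) = range (D + 1) := by
        ext a
        simp only [mem_filter, mem_range, hfil a]
        omega
      rw [← Finset.sum_filter, hset]
      have hDle : k * D ≤ Y - w := by
        rw [hD, mul_comm]
        exact Nat.div_mul_le_self _ _
      have hws : k * s + s ≤ w := by
        calc k * s + s = ∑ i : Fin (k - 1), (k + 1) * m i := by
              rw [hs, Finset.mul_sum, ← Finset.sum_add_distrib]
              exact Finset.sum_congr rfl fun i _ => by ring
          _ ≤ w := Finset.sum_le_sum fun i _ => Nat.mul_le_mul_right _ (by omega)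
      have hexp : (k * D + k * s) + s ≤ Y := by omega
      calc ∑ d ∈ range (D + 1), x ^ d * ∏ i : Fin (k - 1), x ^ m i
          = (∑ d ∈ range (D + 1), x ^ d) * x ^ s := by rw [← Finset.sum_mul, hprodx]
        _ ≤ (2 * x ^ D) * x ^ s := by
            apply mul_le_mul_of_nonneg_right (geom2 hx D) (by positivity)
        _ = 2 * t ^ (k * D + k * s) := by
            rw [← htk, ← pow_mul, ← pow_mul, pow_add]
            ring
        _ ≤ 2 * (t ^ Y * u ^ s) := by
            apply mul_le_mul_of_nonneg_left (key _ _ hexp) (by norm_num)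
        _ = 2 * t ^ Y * ∏ i : Fin (k - 1), u ^ m i := by rw [hprodu]; ring
    · have : ∀ d ∈ range (Y + 1),
          (if k * d + w ≤ Y then x ^ d * ∏ i : Fin (k - 1), x ^ m i else 0) = 0 := by
        intro d _
        rw [if_neg (by omega)]
      rw [Finset.sum_congr rfl this, Finset.sum_const, smul_zero]
      positivity
  calc ∑ m ∈ Fintype.piFinset (fun _ : Fin (k - 1) => range (Y + 1)),
        ∑ d ∈ range (Y + 1),
          (if k * d + ∑ i : Fin (k - 1), (k + 1 + (i : ℕ)) * m i ≤ Y then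
            x ^ d * ∏ i : Fin (k - 1), x ^ m i else 0)
      ≤ ∑ m ∈ Fintype.piFinset (fun _ : Fin (k - 1) => range (Y + 1)),
          2 * t ^ Y * ∏ i : Fin (k - 1), u ^ m i := Finset.sum_le_sum inner
    _ = 2 * t ^ Y * ∑ m ∈ Fintype.piFinset (fun _ : Fin (k - 1) => range (Y + 1)),
          ∏ i : Fin (k - 1), u ^ m i := by rw [Finset.mul_sum]
    _ = 2 * t ^ Y * ∏ _i : Fin (k - 1), ∑ j ∈ range (Y + 1), u ^ j := by
        rw [Finset.prod_univ_sum]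
    _ ≤ 2 * t ^ Y * ((1 - u)⁻¹) ^ (k - 1) := by
        have hgeo : ∑ j ∈ range (Y + 1), u ^ j ≤ (1 - u)⁻¹ := geominv hu0.le hu1 _
        have hgeo0 : (0 : ℝ) ≤ ∑ j ∈ range (Y + 1), u ^ j := by positivity
        rw [Finset.prod_const, Finset.card_univ, Fintype.card_fin]
        apply mul_le_mul_of_nonneg_left (pow_le_pow_left₀ hgeo0 hgeo _) (by positivity)
    _ = 2 * ((1 - u)⁻¹) ^ (k - 1) * t ^ Y := by ring

end Stmt13Aux

open Stmt13Aux Finset UniqueFactorizationMonoid in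
/-- the number of monic `k`-full polynomials of norm at most `q^Y`
is `O(q^{Y/k})`, with constant independent of `q`. -/
theorem stmt_13 (k : ℕ) (hk : 1 ≤ k) : ∃ C : ℝ, 0 < C ∧
    ∀ (Fq : Type) [Field Fq] [Fintype Fq] (d : Polynomial Fq), d ≠ 0 →
      ∀ Y : ℕ,
        (Nat.card {r : Polynomial Fq // r.Monic ∧ IsKFull k r ∧ r.natDegree ≤ Y} : ℝ)
          ≤ C * ((Fintype.card Fq : ℝ) ^ Y) ^ ((1 : ℝ) / k) := by
  have hu0 : (0 : ℝ) < (1 / 2 : ℝ) ^ ((1 : ℝ) / k) := Real.rpow_pos_of_pos (by norm_num) _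
  have hu1 : (1 / 2 : ℝ) ^ ((1 : ℝ) / k) < 1 :=
    Real.rpow_lt_one (by norm_num) (by norm_num) (by positivity)
  refine ⟨2 * ((1 - (1 / 2 : ℝ) ^ ((1 : ℝ) / k))⁻¹) ^ (k - 1), by
    have : (0:ℝ) < 1 - (1 / 2 : ℝ) ^ ((1 : ℝ) / k) := by linarith
    positivity, ?_⟩
  intro Fq _ _ d hd Y
  have hq2 : 2 ≤ Fintype.card Fq := Fintype.one_lt_card
  -- the subtype as a set
  set P : Set (Polynomial Fq) := {r | r.Monic ∧ IsKFull k r ∧ r.natDegree ≤ Y} with hP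
  have hcard : Nat.card {r : Polynomial Fq // r.Monic ∧ IsKFull k r ∧ r.natDegree ≤ Y}
      = P.ncard := Nat.card_coe_set_eq P
  -- P is covered by the fibers G
  have hsub : P ⊆ ⋃ dm ∈ Vx k Y, G (Fq := Fq) k Y dm := by
    intro r hr
    obtain ⟨h1, h2, h3⟩ := hr
    have hdeg := deg_decomp k hk r h1 h2
    have hmemV : ((A k r).natDegree, fun i => (Cc k r i).natDegree) ∈ Vx k Y := by
      rw [Vx, mem_filter]
      constructor
      · rw [mem_product]
        constructor
        · rw [mem_range]
          have : k * (A k r).natDegree ≤ Y := by omega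
          have h4 : (A k r).natDegree ≤ k * (A k r).natDegree :=
            Nat.le_mul_of_pos_left _ (by omega)
          omega
        · rw [Fintype.mem_piFinset]
          intro i
          rw [mem_range]
          show (Cc k r i).natDegree < Y + 1
          have h5 : (k + 1 + (i : ℕ)) * (Cc k r i).natDegree
              ≤ ∑ j : Fin (k - 1), (k + 1 + (j : ℕ)) * (Cc k r j).natDegree :=
            Finset.single_le_sum (f := fun j : Fin (k - 1) => (k + 1 + (j : ℕ)) * (Cc k r j).natDegree) (fun j _ => Nat.zero_le _) (mem_univ i)
          have h6 : (Cc k r i).natDegree ≤ (k + 1 + (i : ℕ)) * (Cc k r i).natDegree :=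
            Nat.le_mul_of_pos_left _ (by omega)
          omega
      · simpa using hdeg ▸ h3
    exact Set.mem_biUnion hmemV ⟨⟨h1, h2, h3⟩, rfl, fun i => rfl⟩
  have hUfin : (⋃ dm ∈ Vx k Y, G (Fq := Fq) k Y dm).Finite :=
    Set.Finite.biUnion (Vx k Y).finite_toSet
      (fun dm _ => (G_finite_card k Y hk dm).1)
  -- the natural-number count
  have hnat : P.ncard ≤ ∑ dm ∈ Vx k Y,
      Fintype.card Fq ^ dm.1 * ∏ i : Fin (k - 1), Fintype.card Fq ^ dm.2 i := by
    calc P.ncard ≤ (⋃ dm ∈ Vx k Y, G (Fq := Fq) k Y dm).ncard :=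
          Set.ncard_le_ncard hsub hUfin
      _ ≤ ∑ dm ∈ Vx k Y, (G (Fq := Fq) k Y dm).ncard := ncard_biUnion_le _ _
      _ ≤ ∑ dm ∈ Vx k Y,
          Fintype.card Fq ^ dm.1 * ∏ i : Fin (k - 1), Fintype.card Fq ^ dm.2 i :=
          Finset.sum_le_sum fun dm _ => (G_finite_card k Y hk dm).2
  -- cast to the reals and use the analytic estimate
  have hreal : (P.ncard : ℝ) ≤ ∑ dm ∈ Vx k Y,
      ((Fintype.card Fq : ℝ) ^ dm.1 * ∏ i : Fin (k - 1), (Fintype.card Fq : ℝ) ^ dm.2 i) := by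
    calc (P.ncard : ℝ) ≤ ((∑ dm ∈ Vx k Y,
          Fintype.card Fq ^ dm.1 * ∏ i : Fin (k - 1), Fintype.card Fq ^ dm.2 i : ℕ) : ℝ) := by
          exact_mod_cast hnat
      _ = _ := by push_cast; rfl
  have hana := analytic k Y hk (Fintype.card Fq : ℝ) (by exact_mod_cast hq2)
  have hpow : ((Fintype.card Fq : ℝ) ^ ((1 : ℝ) / k)) ^ Y
      = ((Fintype.card Fq : ℝ) ^ Y) ^ ((1 : ℝ) / k) := by
    have hx0 : (0 : ℝ) ≤ (Fintype.card Fq : ℝ) := by positivity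
    rw [← Real.rpow_natCast ((Fintype.card Fq : ℝ) ^ ((1 : ℝ) / k)) Y,
      ← Real.rpow_mul hx0, mul_comm, Real.rpow_mul hx0, Real.rpow_natCast]
  rw [hcard]
  calc (P.ncard : ℝ) ≤ _ := hreal
    _ ≤ 2 * ((1 - (1 / 2 : ℝ) ^ ((1 : ℝ) / k))⁻¹) ^ (k - 1) *
        ((Fintype.card Fq : ℝ) ^ ((1 : ℝ) / k)) ^ Y := hana
    _ = 2 * ((1 - (1 / 2 : ℝ) ^ ((1 : ℝ) / k))⁻¹) ^ (k - 1) *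
        ((Fintype.card Fq : ℝ) ^ Y) ^ ((1 : ℝ) / k) := by rw [hpow]

end
end

section
/- The singular integral 𝔍 = ∫_{|φ|<q³} ∫_{K_∞^n} w(tu − b) ψ(φF(u)) du dφ, where w is the indicator of the unit ball {|x| < 1}, F is a non-singular cubic form over F_q (char > 3, n ≥ 10), b ∈ F_q^n with F(b) = 0 and nonvanishing Hessian determinant at b, equals q^{-(n-3)}. -/
open scoped Classical BigOperators ENNReal NNReal
open MeasureTheory Polynomial

set_option linter.unusedSectionVars false
set_option maxHeartbeats 1000000

noncomputable section

abbrev Kinf (Fq : Type) [Field Fq] := LaurentSeries Fq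

def tvar (Fq : Type) [Field Fq] : Kinf Fq := HahnSeries.single (-1 : ℤ) 1

def absK {Fq : Type} [Field Fq] [Fintype Fq] (f : Kinf Fq) : ℝ :=
  if f = 0 then 0 else (Fintype.card Fq : ℝ) ^ (-(f.order))

def polyK {Fq : Type} [Field Fq] (f : Polynomial Fq) : Kinf Fq :=
  Polynomial.aeval (tvar Fq) f

def psiK {Fq : Type} [Field Fq] [Fintype Fq] [Algebra (ZMod (ringChar Fq)) Fq]
    (f : Kinf Fq) : ℂ :=
  Complex.exp (2 * Real.pi * Complex.I *
    ((Algebra.trace (ZMod (ringChar Fq)) Fq (f.coeff 1)).val : ℂ) / (ringChar Fq : ℂ))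

/-- A form is non-singular if, over the algebraic closure, the only common zero of
its partial derivatives is the origin. -/
def NonsingularForm {Fq : Type} [Field Fq] {n : ℕ}
    (F : MvPolynomial (Fin n) Fq) : Prop :=
  ∀ x : Fin n → AlgebraicClosure Fq,
    (∀ i, MvPolynomial.aeval x (MvPolynomial.pderiv i F) = 0) → x = 0

/-- The determinant of the Hessian matrix of a multivariate polynomial. -/
def hessianDet {Fq : Type} [Field Fq] {n : ℕ} (F : MvPolynomial (Fin n) Fq) :
    MvPolynomial (Fin n) Fq :=
  Matrix.det (Matrix.of fun i j => MvPolynomial.pderiv i (MvPolynomial.pderiv j F))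

namespace Stmt18Aux

variable {Fq : Type} [Field Fq] [Fintype Fq]

/-- The "ball" of Laurent series whose coefficients vanish below `m`. -/
def Blt (Fq : Type) [Field Fq] (m : ℤ) : Set (Kinf Fq) := {f | ∀ k < m, f.coeff k = 0}

lemma mem_Blt_iff {m : ℤ} {f : Kinf Fq} :
    f ∈ Blt Fq m ↔ Valued.v f ≤ ((Multiplicative.ofAdd (-m) : Multiplicative ℤ) :
      WithZero (Multiplicative ℤ)) :=
  (LaurentSeries.valuation_le_iff_coeff_lt_eq_zero Fq).symm

lemma Blt.zero_mem {m : ℤ} : (0 : Kinf Fq) ∈ Blt Fq m := fun _ _ => rfl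

lemma Blt.add {m : ℤ} {f g : Kinf Fq} (hf : f ∈ Blt Fq m) (hg : g ∈ Blt Fq m) :
    f + g ∈ Blt Fq m := fun k hk => by
  simp [HahnSeries.coeff_add, hf k hk, hg k hk]

lemma Blt.neg {m : ℤ} {f : Kinf Fq} (hf : f ∈ Blt Fq m) : -f ∈ Blt Fq m := fun k hk => by
  simp [HahnSeries.coeff_neg, hf k hk]

lemma Blt.sub {m : ℤ} {f g : Kinf Fq} (hf : f ∈ Blt Fq m) (hg : g ∈ Blt Fq m) :
    f - g ∈ Blt Fq m := by
  rw [sub_eq_add_neg]; exact Blt.add hf (Blt.neg hg)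

lemma Blt.mono {m m' : ℤ} (h : m' ≤ m) : Blt Fq m ⊆ Blt Fq m' :=
  fun _ hf k hk => hf k (lt_of_lt_of_le hk h)

lemma Blt.mul {a b : ℤ} {f g : Kinf Fq} (hf : f ∈ Blt Fq a) (hg : g ∈ Blt Fq b) :
    f * g ∈ Blt Fq (a + b) := by
  rw [mem_Blt_iff] at hf hg ⊢
  calc Valued.v (f * g) = Valued.v f * Valued.v g := map_mul _ _ _
    _ ≤ ((Multiplicative.ofAdd (-a) : Multiplicative ℤ) : WithZero (Multiplicative ℤ)) *
        ((Multiplicative.ofAdd (-b) : Multiplicative ℤ) : WithZero (Multiplicative ℤ)) :=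
          mul_le_mul' hf hg
    _ = _ := by rw [← WithZero.coe_mul, ← ofAdd_add, neg_add]

lemma one_lt_q : (1 : ℝ) < (Fintype.card Fq : ℝ) := by
  exact_mod_cast Fintype.one_lt_card

lemma q_pos : (0 : ℝ) < (Fintype.card Fq : ℝ) := lt_trans one_pos one_lt_q

lemma absK_lt_iff {f : Kinf Fq} {N : ℤ} :
    absK f < (Fintype.card Fq : ℝ) ^ N ↔ f ∈ Blt Fq (1 - N) := by
  unfold absK
  by_cases hf : f = 0
  · simp only [hf, if_pos rfl]
    constructor
    · intro _ k _; simp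
    · intro _; exact zpow_pos q_pos N
  · rw [if_neg hf, zpow_lt_zpow_iff_right₀ one_lt_q]
    constructor
    · intro h k hk
      exact HahnSeries.coeff_eq_zero_of_lt_order (lt_of_lt_of_le hk (by omega))
    · intro h
      by_contra hlt
      exact (HahnSeries.coeff_order_eq_zero.not.mpr hf) (h f.order (by omega))

lemma Blt_eq_ball (m : ℤ) :
    Blt Fq m = {α : Kinf Fq | absK α < (Fintype.card Fq : ℝ) ^ (1 - m)} := by
  ext f
  rw [Set.mem_setOf_eq, absK_lt_iff]
  norm_num

/-- multiplication by `tvar` shifts the ball filtration. -/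
lemma Blt_shift {m : ℤ} {f : Kinf Fq} : tvar Fq * f ∈ Blt Fq m ↔ f ∈ Blt Fq (m + 1) := by
  constructor
  · intro h k hk
    have h2 := h (k + (-1)) (by omega)
    rw [tvar, HahnSeries.coeff_single_mul_add, one_mul] at h2
    exact h2
  · intro h k hk
    have : k = (k + 1) + (-1) := by omega
    rw [this, tvar, HahnSeries.coeff_single_mul_add, one_mul]
    exact h (k + 1) (by omega)

section Meas

variable [MeasurableSpace (Kinf Fq)] {μ : Measure (Kinf Fq)}

/-- Coset of the ball `Blt m` with center `c`. -/
def cosetS (c : Kinf Fq) (m : ℤ) : Set (Kinf Fq) := {y | y - c ∈ Blt Fq m}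

lemma cosetS_zero (m : ℤ) : cosetS (0 : Kinf Fq) m = Blt Fq m := by
  ext y; simp [cosetS]

lemma cosetS_congr {c c' : Kinf Fq} {m : ℤ} (h : c - c' ∈ Blt Fq m) :
    cosetS c m = cosetS c' m := by
  ext y
  constructor
  · intro hy
    have := Blt.add hy h
    simpa [cosetS, sub_add_sub_cancel] using this
  · intro hy
    have := Blt.sub hy h
    have h2 : y - c' - (c - c') = y - c := by ring
    rwa [h2] at this

lemma measure_cosetS
    (hball : ∀ N : ℤ, μ {α : Kinf Fq | absK α < (Fintype.card Fq : ℝ) ^ N}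
        = ENNReal.ofReal ((Fintype.card Fq : ℝ) ^ N))
    (hinv : ∀ a : Kinf Fq, ∀ s : Set (Kinf Fq), μ ((a + ·) ⁻¹' s) = μ s)
    (c : Kinf Fq) (m : ℤ) :
    μ (cosetS c m) = ENNReal.ofReal ((Fintype.card Fq : ℝ) ^ (1 - m)) := by
  have h1 : cosetS c m = ((-c) + ·) ⁻¹' {α : Kinf Fq | absK α < (Fintype.card Fq : ℝ) ^ (1 - m)} := by
    ext y
    simp only [cosetS, Set.mem_preimage, Set.mem_setOf_eq, ← Blt_eq_ball, neg_add_eq_sub]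
  rw [h1, hinv, hball]

/-- Hull property: a measurable subset of a measurable hull disjoint from the base set is null. -/
lemma hull_null {A S : Set (Kinf Fq)} (hfin : μ A ≠ ⊤)
    (hS : MeasurableSet S) (hSH : S ⊆ toMeasurable μ A) (hSA : ∀ x ∈ S, x ∉ A) : μ S = 0 := by
  have h1 : A ⊆ toMeasurable μ A \ S := fun x hx =>
    ⟨subset_toMeasurable μ A hx, fun hxS => hSA x hxS hx⟩
  have h2 : μ A ≤ μ (toMeasurable μ A \ S) := measure_mono h1
  have h3 : μ S + μ (toMeasurable μ A \ S) = μ (S ∪ toMeasurable μ A) :=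
    measure_add_diff hS.nullMeasurableSet _
  rw [Set.union_eq_self_of_subset_left hSH, measure_toMeasurable] at h3
  have hfin2 : μ (toMeasurable μ A \ S) ≠ ⊤ := by
    intro hc
    rw [hc, add_top] at h3
    exact hfin h3.symm
  have h4 : μ S + μ (toMeasurable μ A \ S) ≤ 0 + μ (toMeasurable μ A \ S) := by
    rw [zero_add, h3]; exact h2
  have := (ENNReal.add_le_add_iff_right hfin2).mp h4
  exact le_antisymm this (zero_le)

/-- If finitely many measurable sets of equal finite measure cover a set whose measure is at
least the sum, then any two of them intersect in a null set. -/
lemma exact_cover_inter_null {ι : Type} [Fintype ι] (P : ι → Set (Kinf Fq))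
    (hmeas : ∀ e, MeasurableSet (P e)) {v : ℝ≥0∞} (hv : v ≠ ⊤)
    (hP : ∀ e, μ (P e) = v) {T : Set (Kinf Fq)}
    (hcov : T ⊆ ⋃ e, P e) (htot : ∑ e : ι, μ (P e) ≤ μ T)
    {e₁ e₂ : ι} (hne : e₁ ≠ e₂) : μ (P e₁ ∩ P e₂) = 0 := by
  classical
  have hsub : (⋃ e, P e) ⊆ (P e₁ \ P e₂) ∪ (⋃ e ∈ Finset.univ.erase e₁, P e) := by
    intro x hx
    obtain ⟨e, he⟩ := Set.mem_iUnion.mp hx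
    by_cases h : e = e₁
    · subst h
      by_cases h2 : x ∈ P e₂
      · exact Or.inr (Set.mem_biUnion (Finset.mem_erase.mpr ⟨hne.symm, Finset.mem_univ _⟩) h2)
      · exact Or.inl ⟨he, h2⟩
    · exact Or.inr (Set.mem_biUnion (Finset.mem_erase.mpr ⟨h, Finset.mem_univ _⟩) he)
  have h1 : μ (⋃ e, P e) ≤ μ (P e₁ \ P e₂) + ∑ e ∈ Finset.univ.erase e₁, μ (P e) :=
    (measure_mono hsub).trans ((measure_union_le _ _).trans
      (add_le_add_right (measure_biUnion_finset_le _ _) _))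
  have h2 : μ (P e₁ \ P e₂) + μ (P e₁ ∩ P e₂) = μ (P e₁) := measure_diff_add_inter _ (hmeas e₂)
  have hsum : μ (P e₁) + ∑ e ∈ Finset.univ.erase e₁, μ (P e) = ∑ e : ι, μ (P e) :=
    Finset.add_sum_erase _ (fun e => μ (P e)) (Finset.mem_univ e₁)
  have hfin : ∑ e : ι, μ (P e) ≠ ⊤ := by
    simp only [hP]
    exact ENNReal.sum_ne_top.mpr fun _ _ => hv
  have hchain : (∑ e : ι, μ (P e)) + μ (P e₁ ∩ P e₂) ≤ (∑ e : ι, μ (P e)) + 0 := by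
    rw [add_zero]
    calc (∑ e : ι, μ (P e)) + μ (P e₁ ∩ P e₂)
        ≤ μ T + μ (P e₁ ∩ P e₂) := add_le_add_left htot _
      _ ≤ μ (⋃ e, P e) + μ (P e₁ ∩ P e₂) := add_le_add_left (measure_mono hcov) _
      _ ≤ (μ (P e₁ \ P e₂) + ∑ e ∈ Finset.univ.erase e₁, μ (P e)) + μ (P e₁ ∩ P e₂) :=
          add_le_add_left h1 _
      _ = (μ (P e₁ \ P e₂) + μ (P e₁ ∩ P e₂)) + ∑ e ∈ Finset.univ.erase e₁, μ (P e) := by ring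
      _ = μ (P e₁) + ∑ e ∈ Finset.univ.erase e₁, μ (P e) := by rw [h2]
      _ = ∑ e : ι, μ (P e) := hsum
  have := (ENNReal.add_le_add_iff_left hfin).mp hchain
  exact le_antisymm this (zero_le)

lemma coeff_sum {ι : Type*} (s : Finset ι) (f : ι → Kinf Fq) (k : ℤ) :
    (∑ i ∈ s, f i).coeff k = ∑ i ∈ s, (f i).coeff k := by
  classical
  induction s using Finset.induction_on with
  | empty => simp
  | insert _ _ h ih => simp [Finset.sum_insert h, HahnSeries.coeff_add, ih]

/-- The canonical center attached to a finitely supported coefficient function. -/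
def ctr (d : ℤ →₀ Fq) : Kinf Fq := ∑ k ∈ d.support, HahnSeries.single k (d k)

lemma ctr_coeff (d : ℤ →₀ Fq) (k : ℤ) : (ctr d).coeff k = d k := by
  classical
  rw [ctr, coeff_sum]
  by_cases hk : k ∈ d.support
  · rw [Finset.sum_eq_single k (fun j _ hj => HahnSeries.coeff_single_of_ne (Ne.symm hj))
      (fun h => absurd hk h)]
    exact HahnSeries.coeff_single_same k _
  · rw [Finset.sum_eq_zero fun j hj => HahnSeries.coeff_single_of_ne ?_]
    · exact (Finsupp.notMem_support_iff.mp hk).symm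
    · intro h; subst h; exact hk hj

/-- Truncation: every Laurent series is congruent mod `Blt m` to a canonical center. -/
lemma trunc_cover (x : Kinf Fq) (m : ℤ) : ∃ d : ℤ →₀ Fq, x - ctr d ∈ Blt Fq m := by
  classical
  by_cases hx : x = 0
  · refine ⟨0, ?_⟩
    simp only [hx, ctr, Finsupp.support_zero, Finset.sum_empty, sub_zero]
    exact Blt.zero_mem
  · have hfin : {k : ℤ | (if k < m then x.coeff k else 0) ≠ 0}.Finite := by
      apply Set.Finite.subset (Set.finite_Ico x.order m)
      intro k hk
      simp only [Set.mem_setOf_eq] at hk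
      by_cases hkm : k < m
      · rw [if_pos hkm] at hk
        refine ⟨?_, hkm⟩
        by_contra hlt
        exact hk (HahnSeries.coeff_eq_zero_of_lt_order (by omega))
      · rw [if_neg hkm] at hk; exact absurd rfl hk
    refine ⟨⟨hfin.toFinset, fun k => if k < m then x.coeff k else 0,
      fun k => by simp [Set.Finite.mem_toFinset]⟩, ?_⟩
    intro k hk
    rw [HahnSeries.coeff_sub, ctr_coeff]
    simp only [Finsupp.coe_mk]
    rw [if_pos hk, sub_self]

/-- Key geometric fact: measurable hulls of distinct cosets of `Blt m` intersect in a null set. -/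
lemma coset_hulls_inter_null
    (hball : ∀ N : ℤ, μ {α : Kinf Fq | absK α < (Fintype.card Fq : ℝ) ^ N}
        = ENNReal.ofReal ((Fintype.card Fq : ℝ) ^ N))
    (hinv : ∀ a : Kinf Fq, ∀ s : Set (Kinf Fq), μ ((a + ·) ⁻¹' s) = μ s)
    {m : ℤ} {c₁ c₂ : Kinf Fq} (hcc : c₁ - c₂ ∉ Blt Fq m) :
    μ (toMeasurable μ (cosetS c₁ m) ∩ toMeasurable μ (cosetS c₂ m)) = 0 := by
  classical
  set q : ℝ := (Fintype.card Fq : ℝ) with hq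
  -- a lower truncation bound for both centers
  set oB : Kinf Fq → ℤ := fun c => if c = 0 then m else min c.order m with hoB
  have hcB : ∀ c : Kinf Fq, c ∈ Blt Fq (oB c) := by
    intro c k hk
    rw [hoB] at hk
    simp only at hk
    by_cases hc : c = 0
    · simp [hc]
    · rw [if_neg hc] at hk
      exact HahnSeries.coeff_eq_zero_of_lt_order (by omega)
  set M : ℤ := min (oB c₁) (oB c₂) with hM
  have hMm : M ≤ m := by
    rw [hM, hoB]
    by_cases hc : c₁ = 0 <;> simp [hc] <;> omega
  have hc₁M : c₁ ∈ Blt Fq M := Blt.mono (min_le_left _ _) (hcB c₁)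
  have hc₂M : c₂ ∈ Blt Fq M := Blt.mono (min_le_right _ _) (hcB c₂)
  -- the finite index type of cosets of Blt m inside Blt M
  set ctrF : (↥(Finset.Ico M m) → Fq) → Kinf Fq :=
    fun e => ∑ k ∈ (Finset.Ico M m).attach, HahnSeries.single (k : ℤ) (e k) with hctrF
  have ctrF_coeff : ∀ (e : ↥(Finset.Ico M m) → Fq) (j : ℤ),
      (ctrF e).coeff j = if h : j ∈ Finset.Ico M m then e ⟨j, h⟩ else 0 := by
    intro e j
    rw [hctrF]
    simp only
    rw [coeff_sum]
    by_cases h : j ∈ Finset.Ico M m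
    · rw [dif_pos h]
      rw [Finset.sum_eq_single (⟨j, h⟩ : ↥(Finset.Ico M m))]
      · exact HahnSeries.coeff_single_same _ _
      · intro k _ hkj
        apply HahnSeries.coeff_single_of_ne
        intro hjk
        apply hkj
        exact Subtype.ext hjk.symm
      · intro hc; exact absurd (Finset.mem_attach _ _) hc
    · rw [dif_neg h]
      apply Finset.sum_eq_zero
      intro k _
      apply HahnSeries.coeff_single_of_ne
      intro hjk
      exact h (hjk ▸ k.2)
  have ctrF_BltM : ∀ e : ↥(Finset.Ico M m) → Fq, ctrF e ∈ Blt Fq M := by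
    intro e k hk
    rw [ctrF_coeff]
    rw [dif_neg]
    intro hc
    rw [Finset.mem_Ico] at hc
    omega
  -- the coefficient restriction of a center
  set eOf : Kinf Fq → (↥(Finset.Ico M m) → Fq) := fun c k => c.coeff (k : ℤ) with heOf
  have congr_eOf : ∀ c : Kinf Fq, c ∈ Blt Fq M → c - ctrF (eOf c) ∈ Blt Fq m := by
    intro c hc k hk
    rw [HahnSeries.coeff_sub, ctrF_coeff]
    by_cases h : k ∈ Finset.Ico M m
    · rw [dif_pos h, heOf, sub_self]
    · rw [dif_neg h, sub_zero]
      rw [Finset.mem_Ico] at h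
      exact hc k (by omega)
  set e₁ : ↥(Finset.Ico M m) → Fq := eOf c₁ with he₁
  set e₂ : ↥(Finset.Ico M m) → Fq := eOf c₂ with he₂
  have hne : e₁ ≠ e₂ := by
    intro h
    apply hcc
    have h1 := congr_eOf c₁ hc₁M
    have h2 := congr_eOf c₂ hc₂M
    rw [← he₁] at h1
    rw [← he₂, ← h] at h2
    have := Blt.sub h1 h2
    have heq : c₁ - ctrF e₁ - (c₂ - ctrF e₁) = c₁ - c₂ := by ring
    rwa [heq] at this
  -- the family of centers, using the given ones at e₁, e₂
  set C : (↥(Finset.Ico M m) → Fq) → Kinf Fq := fun e => if e = e₁ then c₁ else if e = e₂ then c₂ else ctrF e with hC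
  have hCval : ∀ e, C e = if e = e₁ then c₁ else if e = e₂ then c₂ else ctrF e := fun e => rfl
  have hCcongr : ∀ e, cosetS (C e) m = cosetS (ctrF e) m := by
    intro e
    apply cosetS_congr
    rw [hCval e]
    by_cases h1 : e = e₁
    · subst h1
      rw [if_pos rfl]
      have := congr_eOf c₁ hc₁M; rwa [← he₁] at this
    · rw [if_neg h1]
      by_cases h2 : e = e₂
      · subst h2
        rw [if_pos rfl]
        have := congr_eOf c₂ hc₂M; rwa [← he₂] at this
      · rw [if_neg h2, sub_self]
        exact Blt.zero_mem
  set T : Set (Kinf Fq) := Blt Fq M with hT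
  set W : Set (Kinf Fq) := toMeasurable μ T with hW
  set P : (↥(Finset.Ico M m) → Fq) → Set (Kinf Fq) := fun e => toMeasurable μ (cosetS (C e) m) ∩ W with hP
  have hPval : ∀ e, P e = toMeasurable μ (cosetS (C e) m) ∩ W := fun e => rfl
  set v : ℝ≥0∞ := ENNReal.ofReal (q ^ (1 - m)) with hv
  have hμcoset : ∀ c : Kinf Fq, μ (cosetS c m) = v := fun c => measure_cosetS hball hinv c m
  have hμT : μ T = ENNReal.ofReal (q ^ (1 - M)) := by
    rw [hT, ← cosetS_zero M, measure_cosetS hball hinv]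
  have hcosetT : ∀ e, cosetS (ctrF e) m ⊆ T := by
    intro e y hy
    have h1 : y - ctrF e ∈ Blt Fq M := Blt.mono hMm hy
    have := Blt.add h1 (ctrF_BltM e)
    rwa [sub_add_cancel] at this
  have hsubP : ∀ e, cosetS (ctrF e) m ⊆ P e := by
    intro e
    rw [hPval e, ← hCcongr e]
    intro y hy
    exact ⟨subset_toMeasurable _ _ hy, subset_toMeasurable _ _ (hcosetT e ((hCcongr e) ▸ hy))⟩
  have hmeasP : ∀ e, MeasurableSet (P e) :=
    fun e => (measurableSet_toMeasurable _ _).inter (measurableSet_toMeasurable _ _)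
  have hμP : ∀ e, μ (P e) = v := by
    intro e
    apply le_antisymm
    · calc μ (P e) ≤ μ (toMeasurable μ (cosetS (C e) m)) := measure_mono Set.inter_subset_left
        _ = μ (cosetS (C e) m) := measure_toMeasurable _
        _ = v := hμcoset _
    · calc v = μ (cosetS (ctrF e) m) := (hμcoset _).symm
        _ ≤ μ (P e) := measure_mono (hsubP e)
  have hcov : T ⊆ ⋃ e, P e := by
    intro x hx
    refine Set.mem_iUnion.mpr ⟨eOf x, hsubP _ ?_⟩
    exact congr_eOf x hx
  have htot : ∑ e, μ (P e) ≤ μ T := by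
    have hcard : (Fintype.card (↥(Finset.Ico M m) → Fq) : ℝ) = q ^ ((m - M).toNat) := by
      rw [Fintype.card_fun, Fintype.card_coe, Int.card_Ico, hq]
      push_cast
      ring
    have hval : (Fintype.card (↥(Finset.Ico M m) → Fq) : ℝ) * q ^ (1 - m) = q ^ (1 - M) := by
      rw [hcard, ← zpow_natCast q ((m - M).toNat), Int.toNat_of_nonneg (by omega),
        ← zpow_add₀ (ne_of_gt q_pos)]
      congr 1
      omega
    calc ∑ e, μ (P e) = ∑ _e : (↥(Finset.Ico M m) → Fq), v := by simp only [hμP]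
      _ = (Fintype.card (↥(Finset.Ico M m) → Fq) : ℝ≥0∞) * v := by
          rw [Finset.sum_const, Finset.card_univ, nsmul_eq_mul]
      _ = ENNReal.ofReal ((Fintype.card (↥(Finset.Ico M m) → Fq) : ℝ) * q ^ (1 - m)) := by
          rw [hv, ← ENNReal.ofReal_natCast (Fintype.card (↥(Finset.Ico M m) → Fq)),
            ← ENNReal.ofReal_mul (by positivity)]
      _ = μ T := by rw [hval, hμT]
      _ ≤ μ T := le_rfl
  have hkey : μ (P e₁ ∩ P e₂) = 0 :=
    exact_cover_inter_null P hmeasP ENNReal.ofReal_ne_top hμP hcov htot hne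
  have hPe₁ : P e₁ = toMeasurable μ (cosetS c₁ m) ∩ W := by
    rw [hPval e₁, hCval e₁, if_pos rfl]
  have hPe₂ : P e₂ = toMeasurable μ (cosetS c₂ m) ∩ W := by
    rw [hPval e₂, hCval e₂, if_neg hne.symm, if_pos rfl]
  -- outside W, the hull of coset c₁ is null
  have hWc : μ (toMeasurable μ (cosetS c₁ m) \ W) = 0 := by
    apply hull_null (A := cosetS c₁ m)
    · rw [hμcoset]; exact ENNReal.ofReal_ne_top
    · exact (measurableSet_toMeasurable _ _).diff (measurableSet_toMeasurable _ _)
    · exact Set.diff_subset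
    · intro x hxS hxA
      apply hxS.2
      apply subset_toMeasurable
      have hcs : cosetS c₁ m = cosetS (ctrF e₁) m := by
        apply cosetS_congr
        have := congr_eOf c₁ hc₁M; rwa [← he₁] at this
      exact hcosetT e₁ (hcs ▸ hxA)
  have hfinal : toMeasurable μ (cosetS c₁ m) ∩ toMeasurable μ (cosetS c₂ m) ⊆
      (P e₁ ∩ P e₂) ∪ (toMeasurable μ (cosetS c₁ m) \ W) := by
    intro x hx
    by_cases hxW : x ∈ W
    · exact Or.inl ⟨hPe₁ ▸ ⟨hx.1, hxW⟩, hPe₂ ▸ ⟨hx.2, hxW⟩⟩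
    · exact Or.inr ⟨hx.1, hxW⟩
  refine le_antisymm ?_ (zero_le)
  calc μ (toMeasurable μ (cosetS c₁ m) ∩ toMeasurable μ (cosetS c₂ m))
      ≤ μ (P e₁ ∩ P e₂) + μ (toMeasurable μ (cosetS c₁ m) \ W) :=
        (measure_mono hfinal).trans (measure_union_le _ _)
    _ = 0 := by rw [hkey, hWc, add_zero]

/-- Each coset of `Blt m` is squeezed between measurable sets of the same (correct) measure. -/
lemma coset_GH
    (hball : ∀ N : ℤ, μ {α : Kinf Fq | absK α < (Fintype.card Fq : ℝ) ^ N}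
        = ENNReal.ofReal ((Fintype.card Fq : ℝ) ^ N))
    (hinv : ∀ a : Kinf Fq, ∀ s : Set (Kinf Fq), μ ((a + ·) ⁻¹' s) = μ s)
    (c : Kinf Fq) (m : ℤ) :
    ∃ G H : Set (Kinf Fq), MeasurableSet G ∧ MeasurableSet H ∧ G ⊆ cosetS c m ∧
      cosetS c m ⊆ H ∧ μ G = ENNReal.ofReal ((Fintype.card Fq : ℝ) ^ (1 - m)) ∧
      μ H = ENNReal.ofReal ((Fintype.card Fq : ℝ) ^ (1 - m)) := by
  classical
  set H : Set (Kinf Fq) := toMeasurable μ (cosetS c m) with hH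
  set bad : Set (ℤ →₀ Fq) := {d | ctr d - c ∉ Blt Fq m} with hbad
  set G : Set (Kinf Fq) :=
    H \ ⋃ (d : bad), toMeasurable μ (cosetS (ctr d.1) m) with hG
  have hmeasH : MeasurableSet H := measurableSet_toMeasurable _ _
  have hmeasG : MeasurableSet G :=
    hmeasH.diff (MeasurableSet.iUnion fun d => measurableSet_toMeasurable _ _)
  have hGc : G ⊆ cosetS c m := by
    intro x hx
    obtain ⟨d₀, hd₀⟩ := trunc_cover x m
    by_cases hgood : ctr d₀ - c ∈ Blt Fq m
    · have := Blt.add hd₀ hgood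
      rwa [sub_add_sub_cancel] at this
    · exfalso
      apply hx.2
      exact Set.mem_iUnion.mpr ⟨⟨d₀, hgood⟩, subset_toMeasurable _ _ hd₀⟩
  have hμH : μ H = ENNReal.ofReal ((Fintype.card Fq : ℝ) ^ (1 - m)) := by
    rw [hH, measure_toMeasurable, measure_cosetS hball hinv]
  have hHGnull : μ (H \ G) = 0 := by
    have hsub : H \ G ⊆ ⋃ (d : bad), (H ∩ toMeasurable μ (cosetS (ctr d.1) m)) := by
      intro x hx
      have hx2 : x ∈ ⋃ (d : bad), toMeasurable μ (cosetS (ctr d.1) m) := by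
        by_contra hc2
        exact hx.2 ⟨hx.1, hc2⟩
      obtain ⟨d, hd⟩ := Set.mem_iUnion.mp hx2
      exact Set.mem_iUnion.mpr ⟨d, hx.1, hd⟩
    refine le_antisymm ?_ (zero_le)
    calc μ (H \ G) ≤ ∑' d : bad, μ (H ∩ toMeasurable μ (cosetS (ctr d.1) m)) :=
          (measure_mono hsub).trans (measure_iUnion_le _)
      _ = 0 := by
          rw [ENNReal.tsum_eq_zero]
          intro d
          rw [hH]
          apply coset_hulls_inter_null hball hinv
          intro hmem
          apply d.2
          have := Blt.neg hmem
          rwa [neg_sub] at this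
  have hμG : μ G = ENNReal.ofReal ((Fintype.card Fq : ℝ) ^ (1 - m)) := by
    apply le_antisymm
    · rw [← measure_cosetS hball hinv c m]
      exact measure_mono hGc
    · rw [← hμH]
      calc μ H = μ (G ∪ (H \ G)) := by rw [Set.union_diff_cancel (Set.diff_subset)]
        _ ≤ μ G + μ (H \ G) := measure_union_le _ _
        _ = μ G := by rw [hHGnull, add_zero]
  exact ⟨G, H, hmeasG, hmeasH, hGc, subset_toMeasurable _ _, hμG, hμH⟩

lemma coset_nullMeasurable
    (hball : ∀ N : ℤ, μ {α : Kinf Fq | absK α < (Fintype.card Fq : ℝ) ^ N}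
        = ENNReal.ofReal ((Fintype.card Fq : ℝ) ^ N))
    (hinv : ∀ a : Kinf Fq, ∀ s : Set (Kinf Fq), μ ((a + ·) ⁻¹' s) = μ s)
    (c : Kinf Fq) (m : ℤ) : NullMeasurableSet (cosetS c m) μ := by
  obtain ⟨G, H, hmG, hmH, hGc, hcH, hμG, hμH⟩ := coset_GH hball hinv c m
  refine ⟨G, hmG, ?_⟩
  rw [MeasureTheory.ae_eq_set]
  constructor
  · refine le_antisymm ?_ (zero_le)
    calc μ (cosetS c m \ G) ≤ μ (H \ G) := measure_mono (Set.diff_subset_diff_left hcH)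
      _ = μ H - μ G := measure_diff (hGc.trans hcH) hmG.nullMeasurableSet
          (by rw [hμG]; exact ENNReal.ofReal_ne_top)
      _ = 0 := by rw [hμG, hμH, tsub_self]
  · have : G \ cosetS c m = ∅ := Set.diff_eq_empty.mpr hGc
    rw [this, measure_empty]

lemma algebraMap_ps (r : Fq) : algebraMap Fq (PowerSeries Fq) r = PowerSeries.C r := by
  rw [PowerSeries.algebraMap_apply]; simp

lemma algebraMap_K (r : Fq) : (algebraMap Fq (Kinf Fq)) r = HahnSeries.C r := by
  rw [HahnSeries.algebraMap_apply', algebraMap_ps, HahnSeries.ofPowerSeries_C]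

lemma algebraMap_K_coeff (r : Fq) (k : ℤ) :
    ((algebraMap Fq (Kinf Fq)) r).coeff k = if k = 0 then r else 0 := by
  rw [algebraMap_K, HahnSeries.C_apply, HahnSeries.coeff_single]
  split_ifs <;> rfl

/-- Evaluating a homogeneous polynomial at a common multiple. -/
lemma homog_eval_mul {A : Type*} [CommRing A] [Algebra Fq A] {d n : ℕ}
    {F : MvPolynomial (Fin n) Fq} (hF : F.IsHomogeneous d) (r : A) (v : Fin n → A) :
    MvPolynomial.aeval (fun i => r * v i) F = r ^ d * MvPolynomial.aeval v F := by
  classical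
  rw [MvPolynomial.aeval_def, MvPolynomial.aeval_def, MvPolynomial.eval₂_eq,
    MvPolynomial.eval₂_eq, Finset.mul_sum]
  apply Finset.sum_congr rfl
  intro s hs
  have hdeg : ∑ i ∈ s.support, s i = d := by
    have h1 := hF (MvPolynomial.mem_support_iff.mp hs)
    rw [← Finsupp.degree_apply, Finsupp.degree_eq_weight_one]
    exact h1
  have hprod : ∏ i ∈ s.support, (r * v i) ^ s i
      = r ^ d * ∏ i ∈ s.support, (v i) ^ s i := by
    rw [← hdeg, ← Finset.prod_pow_eq_pow_sum]
    rw [← Finset.prod_mul_distrib]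
    apply Finset.prod_congr rfl
    intro i _
    rw [mul_pow]
  rw [hprod]
  ring

lemma psiK_eq_one [Algebra (ZMod (ringChar Fq)) Fq] {f : Kinf Fq} (h : f.coeff 1 = 0) :
    psiK f = 1 := by
  unfold psiK
  rw [h, map_zero, ZMod.val_zero]
  norm_num

/-- The key pointwise vanishing: for `φ` in the outer ball and `u` in the inner box,
the argument of `ψ` has coefficient `0` at index `1`. -/
lemma key_coeff {n : ℕ} {F : MvPolynomial (Fin n) Fq} (hF : F.IsHomogeneous 3)
    {b : Fin n → Fq} (hbF : MvPolynomial.eval b F = 0)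
    {φ : Kinf Fq} (hφ : φ ∈ Blt Fq (-2))
    {u : Fin n → Kinf Fq}
    (hu : ∀ i, tvar Fq * u i - algebraMap Fq (Kinf Fq) (b i) ∈ Blt Fq 1) :
    φ * MvPolynomial.aeval u F ∈ Blt Fq 2 := by
  classical
  set xx : Kinf Fq := HahnSeries.single (1 : ℤ) 1 with hxx
  have hxt : xx * tvar Fq = 1 := by
    rw [hxx, tvar, HahnSeries.single_mul_single, one_mul, add_neg_cancel,
      HahnSeries.single_zero_one]
  set z : Fin n → Kinf Fq := fun i => tvar Fq * u i - algebraMap Fq (Kinf Fq) (b i) with hz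
  set w : Fin n → Kinf Fq := fun i => algebraMap Fq (Kinf Fq) (b i) + z i with hw
  have huw : ∀ i, u i = xx * w i := by
    intro i
    rw [hw, hz]
    simp only
    symm
    calc xx * (algebraMap Fq (Kinf Fq) (b i) +
          (tvar Fq * u i - algebraMap Fq (Kinf Fq) (b i))) = (xx * tvar Fq) * u i := by ring
      _ = u i := by rw [hxt, one_mul]
  have hw_coeff : ∀ i (k : ℤ), k ≤ 0 →
      (w i).coeff k = if k = 0 then b i else 0 := by
    intro i k hk
    rw [hw]
    simp only [HahnSeries.coeff_add]
    have hzk : (z i).coeff k = 0 := hu i k (by omega)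
    rw [hzk, add_zero]
    exact algebraMap_K_coeff (b i) k
  -- each w i is a power series
  have hwps : ∀ i, ∃ W : PowerSeries Fq, (HahnSeries.ofPowerSeries ℤ Fq) W = w i := by
    intro i
    apply (LaurentSeries.val_le_one_iff_eq_coe Fq (w i)).mp
    have : w i ∈ Blt Fq 0 := by
      intro k hk
      rw [hw_coeff i k (by omega), if_neg (by omega)]
    rw [mem_Blt_iff] at this
    rwa [neg_zero, ofAdd_zero, WithZero.coe_one] at this
  choose W hW using hwps
  have hWc : ∀ i, PowerSeries.constantCoeff (W i) = b i := by
    intro i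
    have h1 : ((HahnSeries.ofPowerSeries ℤ Fq) (W i)).coeff (0 : ℤ) = b i := by
      rw [hW i, hw_coeff i 0 le_rfl, if_pos rfl]
    rw [PowerSeries.coeff_coe] at h1
    simpa using h1
  -- the evaluation is a power series with zero constant coefficient
  have hV : (HahnSeries.ofPowerSeries ℤ Fq) (MvPolynomial.aeval W F)
      = MvPolynomial.aeval w F := by
    rw [MvPolynomial.aeval_def, MvPolynomial.aeval_def,
      MvPolynomial.eval₂_comp_left (HahnSeries.ofPowerSeries ℤ Fq)]
    congr 1
    · funext i
      exact hW i
  have hV0 : PowerSeries.constantCoeff (MvPolynomial.aeval W F) = 0 := by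
    rw [MvPolynomial.aeval_def,
      MvPolynomial.eval₂_comp_left (PowerSeries.constantCoeff (R := Fq))]
    have h1 : (PowerSeries.constantCoeff).comp (algebraMap Fq (PowerSeries Fq))
        = RingHom.id Fq := by
      ext r
      simp only [RingHom.coe_comp, Function.comp_apply, RingHom.id_apply]
      rw [algebraMap_ps, PowerSeries.constantCoeff_C]
    rw [h1]
    have h2 : (PowerSeries.constantCoeff) ∘ W = b := funext fun i => hWc i
    rw [h2, ← hbF]
    exact MvPolynomial.eval₂_id F
  have hwBlt : MvPolynomial.aeval w F ∈ Blt Fq 1 := by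
    intro k hk
    rw [← hV, PowerSeries.coeff_coe]
    by_cases hneg : k < 0
    · rw [if_pos hneg]
    · rw [if_neg hneg]
      have hk0 : k = 0 := by omega
      subst hk0
      simpa using hV0
  have hxx3 : xx ^ 3 ∈ Blt Fq 3 := by
    rw [hxx, HahnSeries.single_pow, one_pow]
    intro k hk
    apply HahnSeries.coeff_single_of_ne
    intro hc
    rw [hc] at hk
    norm_num at hk
  have huF : MvPolynomial.aeval u F = xx ^ 3 * MvPolynomial.aeval w F := by
    have : u = fun i => xx * w i := funext huw
    rw [this]
    exact homog_eval_mul hF xx w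
  have h4 : MvPolynomial.aeval u F ∈ Blt Fq 4 := by
    rw [huF]
    have := Blt.mul hxx3 hwBlt
    norm_num at this
    exact this
  have := Blt.mul hφ h4
  norm_num at this
  exact this

end Meas

end Stmt18Aux

open Stmt18Aux in
/-- the singular integral
`𝔍 = ∫_{|φ|<q³} ∫_{|tu−b|<1} ψ(φF(u)) du dφ` equals `q^{-(n-3)}`. -/
theorem stmt_18 {Fq : Type} [Field Fq] [Fintype Fq] [Algebra (ZMod (ringChar Fq)) Fq]
    [MeasurableSpace (Kinf Fq)] (μ : Measure (Kinf Fq)) [SigmaFinite μ]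
    (hinv : ∀ a : Kinf Fq, ∀ s : Set (Kinf Fq), μ ((a + ·) ⁻¹' s) = μ s)
    (hball : ∀ N : ℤ, μ {α : Kinf Fq | absK α < (Fintype.card Fq : ℝ) ^ N}
        = ENNReal.ofReal ((Fintype.card Fq : ℝ) ^ N))
    (hchar : 3 < ringChar Fq)
    {n : ℕ} (hn : 10 ≤ n) (F : MvPolynomial (Fin n) Fq)
    (hF : F.IsHomogeneous 3) (hns : NonsingularForm F)
    (b : Fin n → Fq) (hbF : MvPolynomial.eval b F = 0)
    (hbH : MvPolynomial.eval b (hessianDet F) ≠ 0) :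
    (∫ φ in {φ : Kinf Fq | absK φ < (Fintype.card Fq : ℝ) ^ (3 : ℤ)},
      (∫ u in {u : Fin n → Kinf Fq |
          ∀ i, absK (tvar Fq * u i - algebraMap Fq (Kinf Fq) (b i)) < 1},
        psiK (φ * MvPolynomial.aeval u F)
        ∂(MeasureTheory.Measure.pi fun _ : Fin n => μ)) ∂μ)
      = (Fintype.card Fq : ℂ) ^ (-(n : ℤ) + 3) := by
  classical
  set q : ℝ := (Fintype.card Fq : ℝ) with hq
  set xx : Kinf Fq := HahnSeries.single (1 : ℤ) 1 with hxx
  have htx : tvar Fq * xx = 1 := by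
    rw [hxx, tvar, HahnSeries.single_mul_single, neg_add_cancel, one_mul,
      HahnSeries.single_zero_one]
  set c : Fin n → Kinf Fq := fun i => xx * algebraMap Fq (Kinf Fq) (b i) with hc
  set s : Fin n → Set (Kinf Fq) := fun i => cosetS (c i) 2 with hs
  -- membership translation
  have hmem2 : ∀ (y : Kinf Fq) (i : Fin n),
      y ∈ s i ↔ tvar Fq * y - algebraMap Fq (Kinf Fq) (b i) ∈ Blt Fq 1 := by
    intro y i
    have heq : tvar Fq * (y - c i) = tvar Fq * y - algebraMap Fq (Kinf Fq) (b i) := by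
      rw [hc]
      simp only
      calc tvar Fq * (y - xx * algebraMap Fq (Kinf Fq) (b i))
          = tvar Fq * y - (tvar Fq * xx) * algebraMap Fq (Kinf Fq) (b i) := by ring
        _ = tvar Fq * y - algebraMap Fq (Kinf Fq) (b i) := by rw [htx, one_mul]
    rw [← heq]
    constructor
    · intro h
      exact Blt_shift.mpr h
    · intro h
      have := Blt_shift.mp h
      norm_num at this
      exact this
  have hmem : ∀ (y : Kinf Fq) (i : Fin n),
      absK (tvar Fq * y - algebraMap Fq (Kinf Fq) (b i)) < 1 ↔ y ∈ s i := by
    intro y i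
    rw [hmem2]
    have h1 : (1 : ℝ) = q ^ (0 : ℤ) := by rw [zpow_zero]
    rw [h1, absK_lt_iff]
    norm_num
  have hS : {u : Fin n → Kinf Fq |
      ∀ i, absK (tvar Fq * u i - algebraMap Fq (Kinf Fq) (b i)) < 1}
      = Set.pi Set.univ s := by
    ext u
    simp only [Set.mem_setOf_eq, Set.mem_pi, Set.mem_univ, forall_true_left]
    exact forall_congr' fun i => hmem (u i) i
  -- squeeze the box between measurable boxes
  choose G H hmG hmH hGs hsH hμG hμH using fun i : Fin n => coset_GH hball hinv (c i) 2
  set π : Measure (Fin n → Kinf Fq) := Measure.pi fun _ : Fin n => μ with hπ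
  have hGH : ∀ i, G i ⊆ H i := fun i => (hGs i).trans (hsH i)
  have hval : ∀ (A : Fin n → Set (Kinf Fq)), (∀ i, μ (A i) = ENNReal.ofReal (q ^ (1 - 2 : ℤ))) →
      π (Set.pi Set.univ A) = ENNReal.ofReal (q ^ (-(n : ℤ))) := by
    intro A hA
    rw [hπ, Measure.pi_pi]
    simp only [hA]
    rw [Finset.prod_const, Finset.card_univ, Fintype.card_fin,
      ← ENNReal.ofReal_pow (zpow_nonneg (le_of_lt q_pos) _)]
    congr 1
    rw [← zpow_natCast (q ^ (1 - 2 : ℤ)) n, ← zpow_mul]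
    congr 1
    omega
  have hπG : π (Set.pi Set.univ G) = ENNReal.ofReal (q ^ (-(n : ℤ))) := hval G hμG
  have hπH : π (Set.pi Set.univ H) = ENNReal.ofReal (q ^ (-(n : ℤ))) := hval H hμH
  have hGsubH : Set.pi Set.univ G ⊆ Set.pi Set.univ H :=
    Set.pi_mono fun i _ => hGH i
  have hGsubS : Set.pi Set.univ G ⊆ Set.pi Set.univ s :=
    Set.pi_mono fun i _ => hGs i
  have hSsubH : Set.pi Set.univ s ⊆ Set.pi Set.univ H :=
    Set.pi_mono fun i _ => hsH i
  have hπS : π (Set.pi Set.univ s) = ENNReal.ofReal (q ^ (-(n : ℤ))) := by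
    apply le_antisymm
    · rw [← hπH]; exact measure_mono hSsubH
    · rw [← hπG]; exact measure_mono hGsubS
  have hπHG : π (Set.pi Set.univ H \ Set.pi Set.univ G) = 0 := by
    rw [measure_diff hGsubH (MeasurableSet.univ_pi fun i => hmG i).nullMeasurableSet
      (by rw [hπG]; exact ENNReal.ofReal_ne_top), hπG, hπH, tsub_self]
  have hSnull : NullMeasurableSet (Set.pi Set.univ s) π := by
    refine ⟨Set.pi Set.univ G, MeasurableSet.univ_pi fun i => hmG i, ?_⟩
    rw [MeasureTheory.ae_eq_set]
    constructor
    · refine le_antisymm ?_ (zero_le)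
      calc π (Set.pi Set.univ s \ Set.pi Set.univ G)
          ≤ π (Set.pi Set.univ H \ Set.pi Set.univ G) :=
            measure_mono (Set.diff_subset_diff_left hSsubH)
        _ = 0 := hπHG
    · rw [Set.diff_eq_empty.mpr hGsubS, measure_empty]
  -- the value of the inner integral
  have hqn0 : (0 : ℝ) ≤ q ^ (-(n : ℤ)) := zpow_nonneg (le_of_lt q_pos) _
  have hinner : ∀ φ ∈ {φ : Kinf Fq | absK φ < q ^ (3 : ℤ)},
      (∫ u in {u : Fin n → Kinf Fq |
          ∀ i, absK (tvar Fq * u i - algebraMap Fq (Kinf Fq) (b i)) < 1},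
        psiK (φ * MvPolynomial.aeval u F) ∂π) = ((q ^ (-(n : ℤ)) : ℝ) : ℂ) := by
    intro φ hφ
    have hφB : φ ∈ Blt Fq (-2) := by
      rw [Set.mem_setOf_eq, absK_lt_iff] at hφ
      norm_num at hφ
      exact hφ
    rw [hS]
    rw [setIntegral_congr_fun₀ hSnull (g := fun _ => (1 : ℂ)) ?_]
    · rw [setIntegral_const, measureReal_def, hπS, ENNReal.toReal_ofReal hqn0]
      rw [Complex.real_smul, mul_one]
    · intro u hu
      apply psiK_eq_one
      have hu1 : ∀ i, tvar Fq * u i - algebraMap Fq (Kinf Fq) (b i) ∈ Blt Fq 1 := by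
        intro i
        exact (hmem2 (u i) i).mp (hu i (Set.mem_univ i))
      exact key_coeff hF hbF hφB hu1 1 (by norm_num)
  -- the outer integral
  have hΦ : {φ : Kinf Fq | absK φ < q ^ (3 : ℤ)} = cosetS (0 : Kinf Fq) (-2) := by
    rw [cosetS_zero, Blt_eq_ball]
    norm_num
    rfl
  have hΦnull : NullMeasurableSet {φ : Kinf Fq | absK φ < q ^ (3 : ℤ)} μ := by
    rw [hΦ]
    exact coset_nullMeasurable hball hinv 0 (-2)
  have hμΦ : μ {φ : Kinf Fq | absK φ < q ^ (3 : ℤ)} = ENNReal.ofReal (q ^ (3 : ℤ)) := hball 3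
  rw [setIntegral_congr_fun₀ hΦnull (g := fun _ => ((q ^ (-(n : ℤ)) : ℝ) : ℂ)) hinner]
  rw [setIntegral_const, measureReal_def, hμΦ, ENNReal.toReal_ofReal (zpow_nonneg (le_of_lt q_pos) _)]
  rw [Complex.real_smul, ← Complex.ofReal_mul, ← zpow_add₀ (ne_of_gt q_pos)]
  rw [Complex.ofReal_zpow]
  have : ((q : ℝ) : ℂ) = (Fintype.card Fq : ℂ) := by
    rw [hq]; push_cast; ring
  rw [this]
  congr 1
  omega
end
end
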